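/- Let λ be the real root of x³ − 3x² + 1 with λ > 1 (explicitly λ = sin(4π/9)/sin(π/9)). Then the triple of intervals (K_L, K_M, K_S) = ([−λ, 0], [λ−λ², −λ], [1−2λ², λ−2λ²]) is the unique triple of nonempty compact subsets of ℝ satisfying the system: K_L = λ⁻¹K_L ∪ λ⁻¹K_M ∪ (λ⁻¹K_L + 1 − λ); K_M = (λ⁻¹K_L − λ) ∪ (λ⁻¹K_M − λ) ∪ λ⁻¹K_S; K_S = (λ⁻¹K_L + λ − 2λ²) ∪ (λ⁻¹K_M + λ − 2λ²). Here αK + β denotes {αx + β : x ∈ K}. -/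

import Mathlib

/-- The system (17) of the paper for a triple `(K_L, K_M, K_S)` of nonempty compact
subsets of `ℝ`:
`K_L = λ⁻¹K_L ∪ λ⁻¹K_M ∪ (λ⁻¹K_L + 1 − λ)`,
`K_M = (λ⁻¹K_L − λ) ∪ (λ⁻¹K_M − λ) ∪ λ⁻¹K_S`,
`K_S = (λ⁻¹K_L + λ − 2λ²) ∪ (λ⁻¹K_M + λ − 2λ²)`. -/
def SystemN4 (lam : ℝ) (K : Set ℝ × Set ℝ × Set ℝ) : Prop :=
  (IsCompact K.1 ∧ K.1.Nonempty) ∧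
  (IsCompact K.2.1 ∧ K.2.1.Nonempty) ∧
  (IsCompact K.2.2 ∧ K.2.2.Nonempty) ∧
  K.1 = (fun x => lam⁻¹ * x) '' K.1 ∪ (fun x => lam⁻¹ * x) '' K.2.1 ∪
        (fun x => lam⁻¹ * x + (1 - lam)) '' K.1 ∧
  K.2.1 = (fun x => lam⁻¹ * x + (-lam)) '' K.1 ∪ (fun x => lam⁻¹ * x + (-lam)) '' K.2.1 ∪
        (fun x => lam⁻¹ * x) '' K.2.2 ∧
  K.2.2 = (fun x => lam⁻¹ * x + (lam - 2 * lam ^ 2)) '' K.1 ∪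
        (fun x => lam⁻¹ * x + (lam - 2 * lam ^ 2)) '' K.2.1


open Set EMetric ENNReal NNReal

lemma haus_union_le {s₁ s₂ t₁ t₂ : Set ℝ} :
    hausdorffEdist (s₁ ∪ s₂) (t₁ ∪ t₂) ≤ max (hausdorffEdist s₁ t₁) (hausdorffEdist s₂ t₂) := by
  apply hausdorffEdist_le_of_infEdist
  · rintro x (hx | hx)
    · exact ((infEdist_anti subset_union_left).trans
        (infEdist_le_hausdorffEdist_of_mem hx)).trans (le_max_left _ _)
    · exact ((infEdist_anti subset_union_right).trans
        (infEdist_le_hausdorffEdist_of_mem hx)).trans (le_max_right _ _)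
  · rintro x (hx | hx)
    · refine ((infEdist_anti subset_union_left).trans
        ((infEdist_le_hausdorffEdist_of_mem hx).trans ?_))
      rw [hausdorffEdist_comm]; exact le_max_left _ _
    · refine ((infEdist_anti subset_union_right).trans
        ((infEdist_le_hausdorffEdist_of_mem hx).trans ?_))
      rw [hausdorffEdist_comm]; exact le_max_right _ _

lemma infEdist_image_le' {f : ℝ → ℝ} {K : NNReal} (hK : K ≠ 0)
    (hf : LipschitzWith K f) (x : ℝ) (t : Set ℝ) :
    infEdist (f x) (f '' t) ≤ (K : ℝ≥0∞) * infEdist x t := by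
  rcases eq_or_ne (infEdist x t) ⊤ with h | h
  · rw [h, ENNReal.mul_top (by exact_mod_cast hK)]; exact le_top
  refine ENNReal.le_of_forall_pos_le_add fun ε hε _ => ?_
  have hεK : (0 : ℝ≥0) < ε / K := by positivity
  have hlt : infEdist x t < infEdist x t + (ε / K : ℝ≥0) := by
    exact ENNReal.lt_add_right h (by exact_mod_cast hεK.ne')
  obtain ⟨y, hy, hxy⟩ := infEdist_lt_iff.mp hlt
  calc infEdist (f x) (f '' t) ≤ edist (f x) (f y) :=
        infEdist_le_edist_of_mem (mem_image_of_mem f hy)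
    _ ≤ K * edist x y := hf.edist_le_mul x y
    _ ≤ K * (infEdist x t + (ε / K : ℝ≥0)) := mul_le_mul_right hxy.le _
    _ = K * infEdist x t + K * (ε / K : ℝ≥0) := mul_add _ _ _
    _ = K * infEdist x t + ε := by
        congr 1
        rw [← ENNReal.coe_mul, mul_div_cancel₀ _ hK]

lemma haus_image_le {f : ℝ → ℝ} {K : NNReal} (hK : K ≠ 0)
    (hf : LipschitzWith K f) (s t : Set ℝ) :
    hausdorffEdist (f '' s) (f '' t) ≤ (K : ℝ≥0∞) * hausdorffEdist s t := by
  apply hausdorffEdist_le_of_infEdist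
  · rintro _ ⟨x, hx, rfl⟩
    exact (infEdist_image_le' hK hf x t).trans
      (mul_le_mul_right (infEdist_le_hausdorffEdist_of_mem hx) _)
  · rintro _ ⟨x, hx, rfl⟩
    refine (infEdist_image_le' hK hf x s).trans ?_
    rw [hausdorffEdist, hausdorffEdist_comm]
    exact mul_le_mul_right (infEdist_le_hausdorffEdist_of_mem hx) _

lemma lip_aff (c b : ℝ) (hc : 0 ≤ c) : LipschitzWith c.toNNReal (fun x : ℝ => c * x + b) :=
  LipschitzWith.of_dist_le_mul fun x y => by
    rw [Real.dist_eq, Real.dist_eq, Real.coe_toNNReal c hc]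
    rw [show c * x + b - (c * y + b) = c * (x - y) by ring, abs_mul, abs_of_nonneg hc]

lemma lip_mul (c : ℝ) (hc : 0 ≤ c) : LipschitzWith c.toNNReal (fun x : ℝ => c * x) :=
  LipschitzWith.of_dist_le_mul fun x y => by
    rw [Real.dist_eq, Real.dist_eq, Real.coe_toNNReal c hc, ← mul_sub, abs_mul, abs_of_nonneg hc]

/-- For `λ` the real root of `x³ − 3x² + 1` with `λ > 1` (explicitly
`λ = sin(4π/9)/sin(π/9)`), the triple of intervals
`([−λ,0], [λ−λ²,−λ], [1−2λ², λ−2λ²])` is the unique triple of nonempty compact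
subsets of `ℝ` satisfying the system above. -/
theorem intervals_unique_solution (lam : ℝ)
    (hroot : lam ^ 3 - 3 * lam ^ 2 + 1 = 0) (hlam : 1 < lam)
    (hexp : lam = Real.sin (4 * Real.pi / 9) / Real.sin (Real.pi / 9)) :
    SystemN4 lam (Set.Icc (-lam) 0, Set.Icc (lam - lam ^ 2) (-lam),
      Set.Icc (1 - 2 * lam ^ 2) (lam - 2 * lam ^ 2)) ∧
    ∀ K : Set ℝ × Set ℝ × Set ℝ, SystemN4 lam K →
      K = (Set.Icc (-lam) 0, Set.Icc (lam - lam ^ 2) (-lam),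
        Set.Icc (1 - 2 * lam ^ 2) (lam - 2 * lam ^ 2)) := by
  have h2 : 2 < lam := by nlinarith [sq_nonneg (lam - 1), sq_nonneg lam]
  have hl0 : 0 < lam := by linarith
  have hne : lam ≠ 0 := hl0.ne'
  have hinv : 0 < lam⁻¹ := inv_pos.mpr hl0
  have hsq : lam * lam⁻¹ = 1 := mul_inv_cancel₀ hne
  -- the existence part
  have hsys : SystemN4 lam (Set.Icc (-lam) 0, Set.Icc (lam - lam ^ 2) (-lam),
      Set.Icc (1 - 2 * lam ^ 2) (lam - 2 * lam ^ 2)) := by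
    refine ⟨⟨isCompact_Icc, Set.nonempty_Icc.2 (by linarith)⟩,
      ⟨isCompact_Icc, Set.nonempty_Icc.2 (by nlinarith)⟩,
      ⟨isCompact_Icc, Set.nonempty_Icc.2 (by nlinarith)⟩, ?_, ?_, ?_⟩
    · show Set.Icc (-lam) 0 = _
      rw [Set.image_mul_left_Icc' hinv, Set.image_mul_left_Icc' hinv,
        Set.image_affine_Icc' hinv,
        show lam⁻¹ * -lam = -1 by field_simp,
        show lam⁻¹ * (0:ℝ) = 0 by ring,
        show lam⁻¹ * (lam - lam ^ 2) = 1 - lam by field_simp,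
        show (-1 : ℝ) + (1 - lam) = -lam by ring,
        show (0 : ℝ) + (1 - lam) = 1 - lam by ring,
        Set.union_comm (Set.Icc (-1 : ℝ) 0),
        Set.Icc_union_Icc_eq_Icc (by linarith) (by linarith),
        Set.union_comm,
        Set.Icc_union_Icc_eq_Icc (by linarith) (by linarith)]
    · show Set.Icc (lam - lam ^ 2) (-lam) = _
      rw [Set.image_affine_Icc' hinv, Set.image_affine_Icc' hinv,
        Set.image_mul_left_Icc' hinv,
        show lam⁻¹ * -lam = -1 by field_simp,
        show lam⁻¹ * (0:ℝ) = 0 by ring,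
        show lam⁻¹ * (lam - lam ^ 2) = 1 - lam by field_simp,
        show lam⁻¹ * (1 - 2 * lam ^ 2) = lam - lam ^ 2 by
          field_simp; nlinarith,
        show lam⁻¹ * (lam - 2 * lam ^ 2) = 1 - 2 * lam by field_simp,
        show (-1 : ℝ) + -lam = -1 - lam by ring,
        show (0 : ℝ) + -lam = -lam by ring,
        show (1 - lam : ℝ) + -lam = 1 - 2 * lam by ring,
        Set.union_comm (Set.Icc (-1 - lam) (-lam)),
        Set.Icc_union_Icc_eq_Icc (by linarith) (by linarith),
        Set.union_comm,
        Set.Icc_union_Icc_eq_Icc (by nlinarith) (by linarith)]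
    · show Set.Icc (1 - 2 * lam ^ 2) (lam - 2 * lam ^ 2) = _
      rw [Set.image_affine_Icc' hinv, Set.image_affine_Icc' hinv,
        show lam⁻¹ * -lam = -1 by field_simp,
        show lam⁻¹ * (0:ℝ) = 0 by ring,
        show lam⁻¹ * (lam - lam ^ 2) = 1 - lam by field_simp,
        show (-1 : ℝ) + (lam - 2 * lam ^ 2) = lam - 2 * lam ^ 2 - 1 by ring,
        show (0 : ℝ) + (lam - 2 * lam ^ 2) = lam - 2 * lam ^ 2 by ring,
        show (1 - lam : ℝ) + (lam - 2 * lam ^ 2) = 1 - 2 * lam ^ 2 by ring,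
        Set.union_comm,
        Set.Icc_union_Icc_eq_Icc (by linarith) (by linarith)]
  refine ⟨hsys, ?_⟩
  -- uniqueness
  rintro ⟨KL, KM, KS⟩ ⟨⟨hcL, hneL⟩, ⟨hcM, hneM⟩, ⟨hcS, hneS⟩, hL, hM, hS⟩
  obtain ⟨-, -, -, hIL, hIM, hIS⟩ := hsys
  simp only at hL hM hS hIL hIM hIS
  set IL := Set.Icc (-lam) 0 with hILdef
  set IM := Set.Icc (lam - lam ^ 2) (-lam) with hIMdef
  set IS := Set.Icc (1 - 2 * lam ^ 2) (lam - 2 * lam ^ 2) with hISdef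
  have hneIL : IL.Nonempty := Set.nonempty_Icc.2 (by linarith)
  have hneIM : IM.Nonempty := Set.nonempty_Icc.2 (by nlinarith)
  have hneIS : IS.Nonempty := Set.nonempty_Icc.2 (by nlinarith)
  set c : ℝ≥0∞ := ((lam⁻¹).toNNReal : ℝ≥0∞) with hc
  have hK0 : (lam⁻¹).toNNReal ≠ 0 := (Real.toNNReal_pos.mpr hinv).ne'
  have lips : ∀ b : ℝ, LipschitzWith (lam⁻¹).toNNReal (fun x : ℝ => lam⁻¹ * x + b) :=
    fun b => lip_aff lam⁻¹ b hinv.le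
  have lipm : LipschitzWith (lam⁻¹).toNNReal (fun x : ℝ => lam⁻¹ * x) :=
    lip_mul lam⁻¹ hinv.le
  set E : ℝ≥0∞ := max (hausdorffEdist KL IL) (max (hausdorffEdist KM IM)
    (hausdorffEdist KS IS)) with hE
  have hb1 : hausdorffEdist KL IL ≤ E := le_max_left _ _
  have hb2 : hausdorffEdist KM IM ≤ E := le_trans (le_max_left _ _) (le_max_right _ _)
  have hb3 : hausdorffEdist KS IS ≤ E := le_trans (le_max_right _ _) (le_max_right _ _)
  have step : ∀ (f : ℝ → ℝ), LipschitzWith (lam⁻¹).toNNReal f → ∀ s t : Set ℝ,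
      hausdorffEdist s t ≤ E → hausdorffEdist (f '' s) (f '' t) ≤ c * E :=
    fun f hf s t h => (haus_image_le hK0 hf s t).trans (mul_le_mul_right h _)
  have h1 : hausdorffEdist KL IL ≤ c * E := by
    conv_lhs => rw [hL, hIL]
    exact haus_union_le.trans (max_le (haus_union_le.trans
      (max_le (step _ lipm _ _ hb1) (step _ lipm _ _ hb2))) (step _ (lips _) _ _ hb1))
  have h2' : hausdorffEdist KM IM ≤ c * E := by
    conv_lhs => rw [hM, hIM]
    exact haus_union_le.trans (max_le (haus_union_le.trans
      (max_le (step _ (lips _) _ _ hb1) (step _ (lips _) _ _ hb2))) (step _ lipm _ _ hb3))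
  have h3 : hausdorffEdist KS IS ≤ c * E := by
    conv_lhs => rw [hS, hIS]
    exact haus_union_le.trans (max_le (step _ (lips _) _ _ hb1) (step _ (lips _) _ _ hb2))
  have hEle : E ≤ c * E := max_le h1 (max_le h2' h3)
  have hEtop : E ≠ ⊤ :=
    (max_lt (lt_top_iff_ne_top.2 (Metric.hausdorffEdist_ne_top_of_nonempty_of_bounded hneL hneIL
        hcL.isBounded isCompact_Icc.isBounded)) (max_lt
      (lt_top_iff_ne_top.2 (Metric.hausdorffEdist_ne_top_of_nonempty_of_bounded hneM hneIM
        hcM.isBounded isCompact_Icc.isBounded))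
      (lt_top_iff_ne_top.2 (Metric.hausdorffEdist_ne_top_of_nonempty_of_bounded hneS hneIS
        hcS.isBounded isCompact_Icc.isBounded)))).ne
  have hc1 : c < 1 := by
    rw [hc]
    have hlt : (lam⁻¹).toNNReal < (1 : ℝ).toNNReal := by
      rw [Real.toNNReal_lt_toNNReal_iff one_pos, inv_eq_one_div, div_lt_one hl0]
      exact hlam
    simp only [Real.toNNReal_one] at hlt
    exact_mod_cast hlt
  have hE0 : E = 0 := by
    by_contra h
    have : c * E < 1 * E := ENNReal.mul_lt_mul_left h hEtop hc1
    rw [one_mul] at this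
    exact absurd (hEle.trans_lt this) (lt_irrefl _)
  have eqL : KL = IL := (hausdorffEdist_zero_iff_eq_of_closed hcL.isClosed
    isClosed_Icc).mp (le_antisymm (hb1.trans_eq hE0) (zero_le))
  have eqM : KM = IM := (hausdorffEdist_zero_iff_eq_of_closed hcM.isClosed
    isClosed_Icc).mp (le_antisymm (hb2.trans_eq hE0) (zero_le))
  have eqS : KS = IS := (hausdorffEdist_zero_iff_eq_of_closed hcS.isClosed
    isClosed_Icc).mp (le_antisymm (hb3.trans_eq hE0) (zero_le))
  simp only [Prod.mk.injEq]
  exact ⟨eqL, eqM, eqS⟩
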